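/- Let G be a sub-σ-algebra, V a G-measurable random symmetric positive definite n×n matrix, p⁰ a G-measurable square-integrable ℝⁿ-valued random variable, and y, p square-integrable ℝⁿ-valued random variables. Then E[⟨V(−Δp⁰ + E[Δy|G] + E[Δp|G]), −Δp⁰ + Δy + Δp⟩ | G] = ⟨V(−Δp⁰ + E[Δy|G] + E[Δp|G]), −Δp⁰ + E[Δy|G] + E[Δp|G]⟩ ≥ 0 almost surely, for any differences Δp⁰ (G-measurable, square-integrable) and Δy, Δp (square-integrable). -/

import Mathlib

open Matrix MeasureTheory

section CleanCtx
variable {α : Type*} {m : MeasurableSpace α} {μ : Measure α} {n : ℕ}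

lemma fin_integrable_apply {f : α → Fin n → ℝ} (hf : Integrable f μ) (i : Fin n) :
    Integrable (fun ω => f ω i) μ :=
  (ContinuousLinearMap.proj (R := ℝ) (φ := fun _ : Fin n => ℝ) i).integrable_comp hf

lemma fin_integral_apply {f : α → Fin n → ℝ} (hf : Integrable f μ) (i : Fin n) :
    ∫ x, f x i ∂μ = (∫ x, f x ∂μ) i :=
  (ContinuousLinearMap.proj (R := ℝ) (φ := fun _ : Fin n => ℝ) i).integral_comp_comm hf

lemma fin_memLp_apply {p : ENNReal} {f : α → Fin n → ℝ} (hf : MemLp f p μ) (i : Fin n) :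
    MemLp (fun ω => f ω i) p μ :=
  (ContinuousLinearMap.proj (R := ℝ) (φ := fun _ : Fin n => ℝ) i).comp_memLp' hf

lemma fin_integral_congr {f g : α → ℝ} (h : f =ᵐ[μ] g) : ∫ x, f x ∂μ = ∫ x, g x ∂μ :=
  integral_congr_ae h

end CleanCtx

section Helpers

variable {Ω : Type*} {G : MeasurableSpace Ω} {mΩ : MeasurableSpace Ω} {μ : Measure Ω}
  [IsProbabilityMeasure μ]

/-- Conditional expectation commutes with coordinate evaluation. -/
lemma condexp_apply_coord {n : ℕ} (hG : G ≤ mΩ) {f : Ω → Fin n → ℝ}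
    (hf : Integrable f μ) (i : Fin n) :
    (fun ω => (μ[f|G]) ω i) =ᵐ[μ] μ[fun ω => f ω i|G] := by
  haveI := isFiniteMeasure_trim (μ := μ) hG
  refine ae_eq_condExp_of_forall_setIntegral_eq hG (fin_integrable_apply hf i)
    (fun s _ _ => (fin_integrable_apply (integrable_condExp (m := G)) i).integrableOn)
    (fun s hs hμs => ?_) ?_
  · calc ∫ x in s, (μ[f|G]) x i ∂μ
        = (∫ x in s, (μ[f|G]) x ∂μ) i :=
          fin_integral_apply integrable_condExp.integrableOn i
      _ = (∫ x in s, f x ∂μ) i := by rw [setIntegral_condExp hG hf hs]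
      _ = ∫ x in s, f x i ∂μ := (fin_integral_apply hf.integrableOn i).symm
  · exact ((continuous_apply i).comp_stronglyMeasurable
      stronglyMeasurable_condExp).aestronglyMeasurable

/-- The conditional expectation of a square-integrable real function is square integrable. -/
lemma memLp_two_condexp (hG : G ≤ mΩ) {f : Ω → ℝ} (hf : MemLp f 2 μ) :
    MemLp (μ[f|G]) 2 μ := by
  haveI := isFiniteMeasure_trim (μ := μ) hG
  set F : Lp ℝ 2 μ := hf.toLp f with hF
  set g := (condExpL2 ℝ ℝ hG F : Lp ℝ 2 μ) with hg
  have hg_eq : (g : Ω → ℝ) =ᵐ[μ] μ[f|G] := by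
    refine ae_eq_condExp_of_forall_setIntegral_eq hG (hf.integrable one_le_two)
      (fun s _ _ => ((Lp.memLp g).integrable one_le_two).integrableOn)
      (fun s hs hμs => ?_) ?_
    · have h1 : ∫ x in s, g x ∂μ = ∫ x in s, F x ∂μ :=
        integral_condExpL2_eq_of_fin_meas_real F hs hμs.ne
      rw [h1]
      exact fin_integral_congr (ae_restrict_of_ae hf.coeFn_toLp)
    · exact lpMeas.aestronglyMeasurable (condExpL2 ℝ ℝ hG F)
  exact (Lp.memLp g).ae_eq hg_eq

end Helpers

/-- Conditional-expectation version of the monotonicity cancellation: with a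
`G`-measurable random symmetric positive definite matrix `V` and `G`-measurable `Δp⁰`,
`E[⟨V(−Δp⁰ + E[Δy|G] + E[Δp|G]), −Δp⁰ + Δy + Δp⟩ | G]
  = ⟨V(−Δp⁰ + E[Δy|G] + E[Δp|G]), −Δp⁰ + E[Δy|G] + E[Δp|G]⟩ ≥ 0` a.s. -/
theorem conditional_monotonicity_cancellation {n : ℕ} {Ω : Type*}
    {mΩ : MeasurableSpace Ω} (μ : Measure Ω) [IsProbabilityMeasure μ]
    (G : MeasurableSpace Ω) (hG : G ≤ mΩ)
    (V : Ω → Matrix (Fin n) (Fin n) ℝ)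
    (hV_meas : ∀ i j, Measurable[G] fun ω => V ω i j)
    (hV_bd : ∃ C : ℝ, ∀ ω i j, |V ω i j| ≤ C)
    (hV_symm : ∀ ω, (V ω).IsSymm) (hV_pos : ∀ ω, (V ω).PosDef)
    (Δp0 Δy Δp : Ω → (Fin n → ℝ))
    (hp0_meas : StronglyMeasurable[G] Δp0)
    (hp0 : MemLp Δp0 2 μ) (hy : MemLp Δy 2 μ) (hp : MemLp Δp 2 μ) :
    ((μ[fun ω => (V ω).mulVec (-Δp0 ω + (μ[Δy|G]) ω + (μ[Δp|G]) ω)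
          ⬝ᵥ (-Δp0 ω + Δy ω + Δp ω)|G])
        =ᵐ[μ] fun ω => (V ω).mulVec (-Δp0 ω + (μ[Δy|G]) ω + (μ[Δp|G]) ω)
          ⬝ᵥ (-Δp0 ω + (μ[Δy|G]) ω + (μ[Δp|G]) ω)) ∧
    (∀ᵐ ω ∂μ, 0 ≤ (V ω).mulVec (-Δp0 ω + (μ[Δy|G]) ω + (μ[Δp|G]) ω)
          ⬝ᵥ (-Δp0 ω + (μ[Δy|G]) ω + (μ[Δp|G]) ω)) := by
  obtain ⟨C, hC⟩ := hV_bd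
  haveI := isFiniteMeasure_trim (μ := μ) hG
  have hy_int : Integrable Δy μ := hy.integrable one_le_two
  have hp_int : Integrable Δp μ := hp.integrable one_le_two
  -- component facts about u = -Δp0 + E[Δy|G] + E[Δp|G]
  have hU2 : ∀ j, MemLp (fun ω => -Δp0 ω j + (μ[Δy|G]) ω j + (μ[Δp|G]) ω j) 2 μ := by
    intro j
    exact (((fin_memLp_apply hp0 j).neg).add
        ((memLp_two_condexp hG (fin_memLp_apply hy j)).ae_eq
          (condexp_apply_coord hG hy_int j).symm)).add
      ((memLp_two_condexp hG (fin_memLp_apply hp j)).ae_eq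
        (condexp_apply_coord hG hp_int j).symm)
  have hU_sm : ∀ j, StronglyMeasurable[G]
      (fun ω => -Δp0 ω j + (μ[Δy|G]) ω j + (μ[Δp|G]) ω j) := by
    intro j
    exact ((((continuous_apply j).comp_stronglyMeasurable hp0_meas).neg).add
        ((continuous_apply j).comp_stronglyMeasurable stronglyMeasurable_condExp)).add
      ((continuous_apply j).comp_stronglyMeasurable stronglyMeasurable_condExp)
  -- component facts about W = V * u
  have hW2 : ∀ i, MemLp (fun ω => ∑ j,
      V ω i j * (-Δp0 ω j + (μ[Δy|G]) ω j + (μ[Δp|G]) ω j)) 2 μ := by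
    intro i
    refine memLp_finsetSum Finset.univ fun j _ => ?_
    refine MemLp.of_le_mul (c := C) (hU2 j)
      (((((hV_meas i j).mono hG le_rfl)).stronglyMeasurable.aestronglyMeasurable).mul
        (hU2 j).1) (Filter.Eventually.of_forall fun ω => ?_)
    rw [norm_mul]
    exact mul_le_mul_of_nonneg_right (hC ω i j) (norm_nonneg _)
  have hW_sm : ∀ i, StronglyMeasurable[G] (fun ω => ∑ j,
      V ω i j * (-Δp0 ω j + (μ[Δy|G]) ω j + (μ[Δp|G]) ω j)) := by
    intro i
    refine Measurable.stronglyMeasurable ?_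
    exact Finset.measurable_sum Finset.univ fun j _ =>
      (hV_meas i j).mul (hU_sm j).measurable
  -- component facts about x = -Δp0 + Δy + Δp
  have hX2 : ∀ i, MemLp (fun ω => -Δp0 ω i + Δy ω i + Δp ω i) 2 μ := fun i =>
    (((fin_memLp_apply hp0 i).neg).add (fin_memLp_apply hy i)).add (fin_memLp_apply hp i)
  have hX_int : ∀ i, Integrable (fun ω => -Δp0 ω i + Δy ω i + Δp ω i) μ := fun i =>
    (hX2 i).integrable one_le_two
  have hWX_int : ∀ i, Integrable (fun ω =>
      (∑ j, V ω i j * (-Δp0 ω j + (μ[Δy|G]) ω j + (μ[Δp|G]) ω j)) *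
        (-Δp0 ω i + Δy ω i + Δp ω i)) μ := fun i =>
    memLp_one_iff_integrable.mp ((hX2 i).smul (r := 1) (hW2 i))
  -- conditional expectation of the components of x
  have hXcond : ∀ i, μ[(fun ω => -Δp0 ω i + Δy ω i + Δp ω i)|G]
      =ᵐ[μ] fun ω => -Δp0 ω i + (μ[Δy|G]) ω i + (μ[Δp|G]) ω i := by
    intro i
    have ha_int : Integrable (fun ω => -Δp0 ω i) μ :=
      ((fin_memLp_apply hp0 i).neg).integrable one_le_two
    have hb_int := fin_integrable_apply hy_int i
    have hc_int := fin_integrable_apply hp_int i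
    have h0 : (fun ω => -Δp0 ω i + Δy ω i + Δp ω i)
        = ((fun ω => -Δp0 ω i) + fun ω => Δy ω i) + (fun ω => Δp ω i) := rfl
    rw [h0]
    have h1 : μ[((fun ω => -Δp0 ω i) + fun ω => Δy ω i) + (fun ω => Δp ω i)|G]
        =ᵐ[μ] μ[(fun ω => -Δp0 ω i) + fun ω => Δy ω i|G] + μ[fun ω => Δp ω i|G] :=
      condExp_add (ha_int.add hb_int) hc_int G
    have h2 : μ[(fun ω => -Δp0 ω i) + fun ω => Δy ω i|G]
        =ᵐ[μ] μ[fun ω => -Δp0 ω i|G] + μ[fun ω => Δy ω i|G] :=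
      condExp_add ha_int hb_int G
    have ha : μ[fun ω => -Δp0 ω i|G] = fun ω => -Δp0 ω i :=
      condExp_of_stronglyMeasurable hG
        (((continuous_apply i).comp_stronglyMeasurable hp0_meas).neg) ha_int
    have hb := (condexp_apply_coord hG hy_int i).symm
    have hc := (condexp_apply_coord hG hp_int i).symm
    filter_upwards [h1, h2, hb, hc] with ω h1ω h2ω hbω hcω
    simp only [Pi.add_apply] at h1ω h2ω
    rw [h1ω, h2ω, congrFun ha ω, hbω, hcω]
  -- the pull-out property for each component
  have hpull : ∀ i, μ[(fun ω =>
      (∑ j, V ω i j * (-Δp0 ω j + (μ[Δy|G]) ω j + (μ[Δp|G]) ω j)) *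
        (-Δp0 ω i + Δy ω i + Δp ω i))|G]
      =ᵐ[μ] fun ω =>
      (∑ j, V ω i j * (-Δp0 ω j + (μ[Δy|G]) ω j + (μ[Δp|G]) ω j)) *
        (-Δp0 ω i + (μ[Δy|G]) ω i + (μ[Δp|G]) ω i) := by
    intro i
    have h0 : (fun ω =>
        (∑ j, V ω i j * (-Δp0 ω j + (μ[Δy|G]) ω j + (μ[Δp|G]) ω j)) *
          (-Δp0 ω i + Δy ω i + Δp ω i))
        = (fun ω => ∑ j, V ω i j * (-Δp0 ω j + (μ[Δy|G]) ω j + (μ[Δp|G]) ω j)) *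
          (fun ω => -Δp0 ω i + Δy ω i + Δp ω i) := rfl
    rw [h0]
    have h1 := condExp_mul_of_stronglyMeasurable_left (hW_sm i) (hWX_int i) (hX_int i)
    filter_upwards [h1, hXcond i] with ω h1ω h2ω
    rw [h1ω, Pi.mul_apply, h2ω]
  -- rewrite the dot product as a finite sum of components
  have hfun : (fun ω => (V ω).mulVec (-Δp0 ω + (μ[Δy|G]) ω + (μ[Δp|G]) ω)
        ⬝ᵥ (-Δp0 ω + Δy ω + Δp ω))
      = ∑ i : Fin n, fun ω =>
        (∑ j, V ω i j * (-Δp0 ω j + (μ[Δy|G]) ω j + (μ[Δp|G]) ω j)) *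
          (-Δp0 ω i + Δy ω i + Δp ω i) := by
    funext ω
    simp [Matrix.mulVec, dotProduct, Finset.sum_apply, Pi.add_apply, Pi.neg_apply]
  have hsum : μ[∑ i : Fin n, fun ω =>
        (∑ j, V ω i j * (-Δp0 ω j + (μ[Δy|G]) ω j + (μ[Δp|G]) ω j)) *
          (-Δp0 ω i + Δy ω i + Δp ω i)|G]
      =ᵐ[μ] ∑ i : Fin n, μ[(fun ω =>
        (∑ j, V ω i j * (-Δp0 ω j + (μ[Δy|G]) ω j + (μ[Δp|G]) ω j)) *
          (-Δp0 ω i + Δy ω i + Δp ω i))|G] :=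
    condExp_finsetSum (fun i _ => hWX_int i) G
  have hall : ∀ᵐ ω ∂μ, ∀ i : Fin n, (μ[(fun ω =>
        (∑ j, V ω i j * (-Δp0 ω j + (μ[Δy|G]) ω j + (μ[Δp|G]) ω j)) *
          (-Δp0 ω i + Δy ω i + Δp ω i))|G]) ω
      = (∑ j, V ω i j * (-Δp0 ω j + (μ[Δy|G]) ω j + (μ[Δp|G]) ω j)) *
          (-Δp0 ω i + (μ[Δy|G]) ω i + (μ[Δp|G]) ω i) :=
    ae_all_iff.mpr fun i => hpull i
  constructor
  · rw [hfun]
    refine hsum.trans ?_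
    filter_upwards [hall] with ω hω
    rw [Finset.sum_apply]
    calc (∑ i : Fin n, (μ[(fun ω =>
          (∑ j, V ω i j * (-Δp0 ω j + (μ[Δy|G]) ω j + (μ[Δp|G]) ω j)) *
            (-Δp0 ω i + Δy ω i + Δp ω i))|G]) ω)
        = ∑ i : Fin n,
          (∑ j, V ω i j * (-Δp0 ω j + (μ[Δy|G]) ω j + (μ[Δp|G]) ω j)) *
            (-Δp0 ω i + (μ[Δy|G]) ω i + (μ[Δp|G]) ω i) :=
          Finset.sum_congr rfl fun i _ => hω i
      _ = (V ω).mulVec (-Δp0 ω + (μ[Δy|G]) ω + (μ[Δp|G]) ω)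
            ⬝ᵥ (-Δp0 ω + (μ[Δy|G]) ω + (μ[Δp|G]) ω) := by
          simp [Matrix.mulVec, dotProduct, Pi.add_apply, Pi.neg_apply]
  · refine Filter.Eventually.of_forall fun ω => ?_
    have h := (hV_pos ω).posSemidef.dotProduct_mulVec_nonneg (x := -Δp0 ω + (μ[Δy|G]) ω + (μ[Δp|G]) ω)
    rw [dotProduct_comm]
    simpa using h
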